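/- Let G_1, G_2 be H-consistent graphs and k ≥ 2. Then TS_k(H(G_1,G_2)) equals the union TS_k(G_1) ∪ TS_k(G_2) if and only if there is no pair of size-k independent sets S_1 of G_1 and S_2 of G_2 with |S_1 ∩ V(H)| = |S_2 ∩ V(H)| = |S_1 ∩ S_2| = k−1. -/
import Mathlib


open SimpleGraph

/-- `I` is a size-`k` independent set of the labelled graph `G` with vertex set `Vs`. -/
def IsIndepK {W : Type*} (G : SimpleGraph W) (Vs : Set W) (k : ℕ) (I : Finset W) : Prop :=
  (I : Set W) ⊆ Vs ∧ I.card = k ∧ ∀ u ∈ I, ∀ v ∈ I, ¬ G.Adj u v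

/-- Token-sliding adjacency between size-`k` independent sets of the labelled graph `G`
with vertex set `Vs`. -/
def TSAdj {W : Type*} (G : SimpleGraph W) (Vs : Set W) (k : ℕ) (I J : Finset W) : Prop :=
  IsIndepK G Vs k I ∧ IsIndepK G Vs k J ∧
    ∃ u v, (I : Set W) \ (J : Set W) = {u} ∧ (J : Set W) \ (I : Set W) = {v} ∧ G.Adj u v

/-- The `H`-join of the labelled graphs `G₁` (vertex set `V₁`) and `G₂` (vertex set `V₂`),
where `H` is the common induced subgraph on `V₁ ∩ V₂`: all edges of `G₁` and `G₂`, plus all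
edges between `V₁ \ V₂` and `V₂ \ V₁`. -/
def hJoin {W : Type*} (G₁ G₂ : SimpleGraph W) (V₁ V₂ : Set W) : SimpleGraph W :=
  SimpleGraph.fromRel fun a b =>
    G₁.Adj a b ∨ G₂.Adj a b ∨ (a ∈ V₁ \ V₂ ∧ b ∈ V₂ \ V₁)

/-- The crossing condition of Proposition 7: `S₁` is a size-`k` independent set of `G₁`,
`S₂` one of `G₂`, and `|S₁ ∩ W| = |S₂ ∩ W| = |S₁ ∩ S₂| = k - 1` where `W = V₁ ∩ V₂`. -/
def Crossing {W : Type*} (G₁ G₂ : SimpleGraph W) (V₁ V₂ : Set W) (k : ℕ)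
    (S₁ S₂ : Finset W) : Prop :=
  IsIndepK G₁ V₁ k S₁ ∧ IsIndepK G₂ V₂ k S₂ ∧
    ((S₁ : Set W) ∩ (V₁ ∩ V₂)).ncard = k - 1 ∧
    ((S₂ : Set W) ∩ (V₁ ∩ V₂)).ncard = k - 1 ∧
    ((S₁ : Set W) ∩ (S₂ : Set W)).ncard = k - 1

section Aux

variable {W : Type*} {G₁ G₂ : SimpleGraph W} {V₁ V₂ : Set W}

lemma hJoin_adj {a b : W} :
    (hJoin G₁ G₂ V₁ V₂).Adj a b ↔
      G₁.Adj a b ∨ G₂.Adj a b ∨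
        (a ∈ V₁ \ V₂ ∧ b ∈ V₂ \ V₁) ∨ (b ∈ V₁ \ V₂ ∧ a ∈ V₂ \ V₁) := by
  unfold hJoin
  rw [SimpleGraph.fromRel_adj]
  constructor
  · rintro ⟨hne, h | h⟩
    · rcases h with h | h | h
      · exact Or.inl h
      · exact Or.inr (Or.inl h)
      · exact Or.inr (Or.inr (Or.inl h))
    · rcases h with h | h | h
      · exact Or.inl h.symm
      · exact Or.inr (Or.inl h.symm)
      · exact Or.inr (Or.inr (Or.inr h))
  · intro h
    have hne : a ≠ b := by
      rcases h with h | h | ⟨⟨_, h1⟩, h2, _⟩ | ⟨⟨_, h1⟩, h2, _⟩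
      · exact h.ne
      · exact h.ne
      · rintro rfl; exact h1 h2
      · rintro rfl; exact h1 h2
    exact ⟨hne, by tauto⟩

/-- An independent set of `G₁` inside `V₁` is independent in the join. -/
lemma indep_join_of_left (hE₂ : ∀ a b, G₂.Adj a b → a ∈ V₂ ∧ b ∈ V₂)
    (hcons : ∀ a b, a ∈ V₁ ∩ V₂ → b ∈ V₁ ∩ V₂ → (G₁.Adj a b ↔ G₂.Adj a b))
    {k : ℕ} {I : Finset W} (hI : IsIndepK G₁ V₁ k I) :
    IsIndepK (hJoin G₁ G₂ V₁ V₂) Set.univ k I := by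
  obtain ⟨hsub, hcard, hind⟩ := hI
  refine ⟨Set.subset_univ _, hcard, fun u hu v hv hadj => ?_⟩
  rcases hJoin_adj.mp hadj with h | h | ⟨_, _, h2⟩ | ⟨_, _, h2⟩
  · exact hind u hu v hv h
  · have hu2 := (hE₂ _ _ h).1
    have hv2 := (hE₂ _ _ h).2
    exact hind u hu v hv ((hcons u v ⟨hsub hu, hu2⟩ ⟨hsub hv, hv2⟩).mpr h)
  · exact h2 (hsub hv)
  · exact h2 (hsub hu)

/-- An independent set of `G₂` inside `V₂` is independent in the join. -/
lemma indep_join_of_right (hE₁ : ∀ a b, G₁.Adj a b → a ∈ V₁ ∧ b ∈ V₁)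
    (hcons : ∀ a b, a ∈ V₁ ∩ V₂ → b ∈ V₁ ∩ V₂ → (G₁.Adj a b ↔ G₂.Adj a b))
    {k : ℕ} {I : Finset W} (hI : IsIndepK G₂ V₂ k I) :
    IsIndepK (hJoin G₁ G₂ V₁ V₂) Set.univ k I := by
  obtain ⟨hsub, hcard, hind⟩ := hI
  refine ⟨Set.subset_univ _, hcard, fun u hu v hv hadj => ?_⟩
  rcases hJoin_adj.mp hadj with h | h | ⟨⟨_, h2⟩, _⟩ | ⟨⟨_, h2⟩, _⟩
  · have hu1 := (hE₁ _ _ h).1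
    have hv1 := (hE₁ _ _ h).2
    exact hind u hu v hv ((hcons u v ⟨hu1, hsub hu⟩ ⟨hv1, hsub hv⟩).mp h)
  · exact hind u hu v hv h
  · exact h2 (hsub hu)
  · exact h2 (hsub hv)

/-- An independent set of the join is an independent set of `G₁` or of `G₂`. -/
lemma indep_of_join (hcover : V₁ ∪ V₂ = Set.univ)
    {k : ℕ} {I : Finset W} (hI : IsIndepK (hJoin G₁ G₂ V₁ V₂) Set.univ k I) :
    IsIndepK G₁ V₁ k I ∨ IsIndepK G₂ V₂ k I := by
  obtain ⟨-, hcard, hind⟩ := hI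
  by_cases h : ∀ x ∈ I, x ∈ V₁
  · left
    exact ⟨fun x hx => h x hx, hcard,
      fun u hu v hv hadj => hind u hu v hv (hJoin_adj.mpr (Or.inl hadj))⟩
  · push_neg at h
    obtain ⟨y, hyI, hyV₁⟩ := h
    have hyV₂ : y ∈ V₂ := by
      have : y ∈ V₁ ∪ V₂ := by rw [hcover]; trivial
      exact ((Set.mem_union _ _ _).mp this).resolve_left hyV₁
    right
    have hsub : (I : Set W) ⊆ V₂ := by
      intro x hx
      by_contra hxV₂
      have hxV₁ : x ∈ V₁ := by
        have : x ∈ V₁ ∪ V₂ := by rw [hcover]; trivial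
        exact ((Set.mem_union _ _ _).mp this).resolve_right hxV₂
      exact hind x hx y hyI (hJoin_adj.mpr (Or.inr (Or.inr (Or.inl ⟨⟨hxV₁, hxV₂⟩, hyV₂, hyV₁⟩))))
    exact ⟨hsub, hcard, fun u hu v hv hadj =>
      hind u hu v hv (hJoin_adj.mpr (Or.inr (Or.inl hadj)))⟩

/-- An independent set of `G₁` contained in `V₂` is independent in `G₂`. -/
lemma indep_upgrade₁₂
    (hcons : ∀ a b, a ∈ V₁ ∩ V₂ → b ∈ V₁ ∩ V₂ → (G₁.Adj a b ↔ G₂.Adj a b))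
    {k : ℕ} {I : Finset W} (hI : IsIndepK G₁ V₁ k I) (hs : (I : Set W) ⊆ V₂) :
    IsIndepK G₂ V₂ k I :=
  ⟨hs, hI.2.1, fun u hu v hv hadj =>
    hI.2.2 u hu v hv ((hcons u v ⟨hI.1 hu, hs hu⟩ ⟨hI.1 hv, hs hv⟩).mpr hadj)⟩

/-- An independent set of `G₂` contained in `V₁` is independent in `G₁`. -/
lemma indep_upgrade₂₁
    (hcons : ∀ a b, a ∈ V₁ ∩ V₂ → b ∈ V₁ ∩ V₂ → (G₁.Adj a b ↔ G₂.Adj a b))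
    {k : ℕ} {I : Finset W} (hI : IsIndepK G₂ V₂ k I) (hs : (I : Set W) ⊆ V₁) :
    IsIndepK G₁ V₁ k I :=
  ⟨hs, hI.2.1, fun u hu v hv hadj =>
    hI.2.2 u hu v hv ((hcons u v ⟨hs hu, hI.1 hu⟩ ⟨hs hv, hI.1 hv⟩).mp hadj)⟩

end Aux

theorem stmt12 {W : Type*} (G₁ G₂ : SimpleGraph W) (V₁ V₂ : Set W) (k : ℕ) (hk : 2 ≤ k)
    (hE₁ : ∀ a b, G₁.Adj a b → a ∈ V₁ ∧ b ∈ V₁)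
    (hE₂ : ∀ a b, G₂.Adj a b → a ∈ V₂ ∧ b ∈ V₂)
    (hcover : V₁ ∪ V₂ = Set.univ)
    (hcons : ∀ a b, a ∈ V₁ ∩ V₂ → b ∈ V₁ ∩ V₂ → (G₁.Adj a b ↔ G₂.Adj a b)) :
    (∀ I J : Finset W, TSAdj (hJoin G₁ G₂ V₁ V₂) Set.univ k I J ↔
        (TSAdj G₁ V₁ k I J ∨ TSAdj G₂ V₂ k I J)) ↔
      ¬ ∃ S₁ S₂ : Finset W, Crossing G₁ G₂ V₁ V₂ k S₁ S₂ := by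
  classical
  constructor
  · -- equality of TS graphs ⇒ no crossing pair
    rintro hforall ⟨S₁, S₂, hI₁, hJ₂, hc₁, hc₂, hc₃⟩
    have hcardI : S₁.card = k := hI₁.2.1
    have hcardJ : S₂.card = k := hJ₂.2.1
    have hinter : (S₁ ∩ S₂).card = k - 1 := by
      rw [← Set.ncard_coe_finset, Finset.coe_inter]; exact hc₃
    have hd1 : (S₁ \ S₂).card = 1 := by
      have := Finset.card_inter_add_card_sdiff S₁ S₂
      omega
    have hd2 : (S₂ \ S₁).card = 1 := by
      have h := Finset.card_inter_add_card_sdiff S₂ S₁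
      rw [Finset.inter_comm] at h
      omega
    obtain ⟨u, hu⟩ := Finset.card_eq_one.mp hd1
    obtain ⟨v, hv⟩ := Finset.card_eq_one.mp hd2
    have huS : u ∈ S₁ ∧ u ∉ S₂ := by
      have : u ∈ S₁ \ S₂ := by rw [hu]; exact Finset.mem_singleton_self u
      exact ⟨(Finset.mem_sdiff.mp this).1, (Finset.mem_sdiff.mp this).2⟩
    have hvS : v ∈ S₂ ∧ v ∉ S₁ := by
      have : v ∈ S₂ \ S₁ := by rw [hv]; exact Finset.mem_singleton_self v
      exact ⟨(Finset.mem_sdiff.mp this).1, (Finset.mem_sdiff.mp this).2⟩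
    -- S₁ ∩ (V₁ ∩ V₂) = S₁ ∩ S₂
    have hfin1 : ((S₁ : Set W) ∩ (V₁ ∩ V₂)).Finite :=
      (S₁.finite_toSet).subset (Set.inter_subset_left)
    have hsub1 : ((S₁ ∩ S₂ : Finset W) : Set W) ⊆ (S₁ : Set W) ∩ (V₁ ∩ V₂) := by
      intro x hx
      rw [Finset.coe_inter] at hx
      exact ⟨hx.1, hI₁.1 hx.1, hJ₂.1 hx.2⟩
    have heq1 : ((S₁ ∩ S₂ : Finset W) : Set W) = (S₁ : Set W) ∩ (V₁ ∩ V₂) := by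
      apply Set.eq_of_subset_of_ncard_le hsub1 _ hfin1
      rw [Set.ncard_coe_finset, hinter, hc₁]
    have hfin2 : ((S₂ : Set W) ∩ (V₁ ∩ V₂)).Finite :=
      (S₂.finite_toSet).subset (Set.inter_subset_left)
    have hsub2 : ((S₁ ∩ S₂ : Finset W) : Set W) ⊆ (S₂ : Set W) ∩ (V₁ ∩ V₂) := by
      intro x hx
      rw [Finset.coe_inter] at hx
      exact ⟨hx.2, hI₁.1 hx.1, hJ₂.1 hx.2⟩
    have heq2 : ((S₁ ∩ S₂ : Finset W) : Set W) = (S₂ : Set W) ∩ (V₁ ∩ V₂) := by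
      apply Set.eq_of_subset_of_ncard_le hsub2 _ hfin2
      rw [Set.ncard_coe_finset, hinter, hc₂]
    have huV₂ : u ∉ V₂ := by
      intro huV₂
      have : u ∈ ((S₁ ∩ S₂ : Finset W) : Set W) := by
        rw [heq1]; exact ⟨huS.1, hI₁.1 huS.1, huV₂⟩
      rw [Finset.coe_inter] at this
      exact huS.2 this.2
    have hvV₁ : v ∉ V₁ := by
      intro hvV₁
      have : v ∈ ((S₁ ∩ S₂ : Finset W) : Set W) := by
        rw [heq2]; exact ⟨hvS.1, hvV₁, hJ₂.1 hvS.1⟩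
      rw [Finset.coe_inter] at this
      exact hvS.2 this.1
    have hjoin : TSAdj (hJoin G₁ G₂ V₁ V₂) Set.univ k S₁ S₂ := by
      refine ⟨indep_join_of_left hE₂ hcons hI₁, indep_join_of_right hE₁ hcons hJ₂,
        u, v, ?_, ?_, ?_⟩
      · rw [← Finset.coe_sdiff, hu, Finset.coe_singleton]
      · rw [← Finset.coe_sdiff, hv, Finset.coe_singleton]
      · exact hJoin_adj.mpr (Or.inr (Or.inr (Or.inl
          ⟨⟨hI₁.1 huS.1, huV₂⟩, hJ₂.1 hvS.1, hvV₁⟩)))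
    rcases (hforall S₁ S₂).mp hjoin with h | h
    · exact hvV₁ (h.2.1.1 hvS.1)
    · exact huV₂ (h.1.1 huS.1)
  · -- no crossing pair ⇒ equality of TS graphs
    intro hnc I J
    constructor
    · rintro ⟨hI, hJ, u, v, hIJ, hJI, hadj⟩
      have huI : u ∈ I ∧ u ∉ J := by
        have h := Set.mem_singleton u
        rw [← hIJ] at h
        exact ⟨h.1, h.2⟩
      have hvJ : v ∈ J ∧ v ∉ I := by
        have h := Set.mem_singleton v
        rw [← hJI] at h
        exact ⟨h.1, h.2⟩
      have huniqI : ∀ x ∈ I, x ∉ J → x = u := by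
        intro x hx hx'
        have : x ∈ (I : Set W) \ (J : Set W) := ⟨hx, hx'⟩
        rw [hIJ] at this; exact this
      have huniqJ : ∀ x ∈ J, x ∉ I → x = v := by
        intro x hx hx'
        have : x ∈ (J : Set W) \ (I : Set W) := ⟨hx, hx'⟩
        rw [hJI] at this; exact this
      have hdI : I \ J = {u} := by
        apply Finset.coe_injective
        rw [Finset.coe_sdiff, hIJ, Finset.coe_singleton]
      have hinter : (I ∩ J).card = k - 1 := by
        have h := Finset.card_inter_add_card_sdiff I J
        rw [hdI, Finset.card_singleton, hI.2.1] at h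
        omega
      rcases indep_of_join hcover hI with hI₁ | hI₂ <;>
        rcases indep_of_join hcover hJ with hJ₁ | hJ₂
      · -- both in G₁
        left
        refine ⟨hI₁, hJ₁, u, v, hIJ, hJI, ?_⟩
        have huV₁ : u ∈ V₁ := hI₁.1 huI.1
        have hvV₁ : v ∈ V₁ := hJ₁.1 hvJ.1
        rcases hJoin_adj.mp hadj with h | h | ⟨_, _, h2⟩ | ⟨_, _, h2⟩
        · exact h
        · exact (hcons u v ⟨huV₁, (hE₂ _ _ h).1⟩ ⟨hvV₁, (hE₂ _ _ h).2⟩).mpr h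
        · exact absurd hvV₁ h2
        · exact absurd huV₁ h2
      · -- I in G₁, J in G₂
        by_cases huV₂ : u ∈ V₂
        · -- I ⊆ V₂, reduce to the G₂ case
          have hIsub : (I : Set W) ⊆ V₂ := by
            intro x hx
            by_cases hxJ : x ∈ J
            · exact hJ₂.1 hxJ
            · rw [huniqI x hx hxJ]; exact huV₂
          have hI₂ := indep_upgrade₁₂ hcons hI₁ hIsub
          right
          refine ⟨hI₂, hJ₂, u, v, hIJ, hJI, ?_⟩
          have hvV₂ : v ∈ V₂ := hJ₂.1 hvJ.1
          rcases hJoin_adj.mp hadj with h | h | ⟨⟨_, h2⟩, _⟩ | ⟨⟨_, h2⟩, _⟩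
          · exact (hcons u v ⟨(hE₁ _ _ h).1, huV₂⟩ ⟨(hE₁ _ _ h).2, hvV₂⟩).mp h
          · exact h
          · exact absurd huV₂ h2
          · exact absurd hvV₂ h2
        · by_cases hvV₁ : v ∈ V₁
          · -- J ⊆ V₁, reduce to the G₁ case
            have hJsub : (J : Set W) ⊆ V₁ := by
              intro x hx
              by_cases hxI : x ∈ I
              · exact hI₁.1 hxI
              · rw [huniqJ x hx hxI]; exact hvV₁
            have hJ₁ := indep_upgrade₂₁ hcons hJ₂ hJsub
            left
            refine ⟨hI₁, hJ₁, u, v, hIJ, hJI, ?_⟩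
            have huV₁ : u ∈ V₁ := hI₁.1 huI.1
            rcases hJoin_adj.mp hadj with h | h | ⟨_, _, h2⟩ | ⟨_, _, h2⟩
            · exact h
            · exact (hcons u v ⟨huV₁, (hE₂ _ _ h).1⟩ ⟨hvV₁, (hE₂ _ _ h).2⟩).mpr h
            · exact absurd hvV₁ h2
            · exact absurd huV₁ h2
          · -- crossing pair: contradiction
            exfalso
            apply hnc
            refine ⟨I, J, hI₁, hJ₂, ?_, ?_, ?_⟩
            · have : (I : Set W) ∩ (V₁ ∩ V₂) = ((I ∩ J : Finset W) : Set W) := by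
                ext x
                rw [Finset.coe_inter]
                constructor
                · rintro ⟨hxI, _, hxV₂⟩
                  refine ⟨hxI, ?_⟩
                  by_contra hxJ
                  exact huV₂ ((huniqI x hxI hxJ) ▸ hxV₂)
                · rintro ⟨hxI, hxJ⟩
                  exact ⟨hxI, hI₁.1 hxI, hJ₂.1 hxJ⟩
              rw [this, Set.ncard_coe_finset, hinter]
            · have : (J : Set W) ∩ (V₁ ∩ V₂) = ((I ∩ J : Finset W) : Set W) := by
                ext x
                rw [Finset.coe_inter]
                constructor
                · rintro ⟨hxJ, hxV₁, _⟩
                  refine ⟨?_, hxJ⟩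
                  by_contra hxI
                  exact hvV₁ ((huniqJ x hxJ hxI) ▸ hxV₁)
                · rintro ⟨hxI, hxJ⟩
                  exact ⟨hxJ, hI₁.1 hxI, hJ₂.1 hxJ⟩
              rw [this, Set.ncard_coe_finset, hinter]
            · rw [← Finset.coe_inter, Set.ncard_coe_finset, hinter]
      · -- I in G₂, J in G₁ (mirror case)
        by_cases hvV₂ : v ∈ V₂
        · -- J ⊆ V₂, reduce to the G₂ case
          have hJsub : (J : Set W) ⊆ V₂ := by
            intro x hx
            by_cases hxI : x ∈ I
            · exact hI₂.1 hxI
            · rw [huniqJ x hx hxI]; exact hvV₂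
          have hJ₂ := indep_upgrade₁₂ hcons hJ₁ hJsub
          right
          refine ⟨hI₂, hJ₂, u, v, hIJ, hJI, ?_⟩
          have huV₂ : u ∈ V₂ := hI₂.1 huI.1
          rcases hJoin_adj.mp hadj with h | h | ⟨⟨_, h2⟩, _⟩ | ⟨⟨_, h2⟩, _⟩
          · exact (hcons u v ⟨(hE₁ _ _ h).1, huV₂⟩ ⟨(hE₁ _ _ h).2, hvV₂⟩).mp h
          · exact h
          · exact absurd huV₂ h2
          · exact absurd hvV₂ h2
        · by_cases huV₁ : u ∈ V₁
          · -- I ⊆ V₁, reduce to the G₁ case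
            have hIsub : (I : Set W) ⊆ V₁ := by
              intro x hx
              by_cases hxJ : x ∈ J
              · exact hJ₁.1 hxJ
              · rw [huniqI x hx hxJ]; exact huV₁
            have hI₁ := indep_upgrade₂₁ hcons hI₂ hIsub
            left
            refine ⟨hI₁, hJ₁, u, v, hIJ, hJI, ?_⟩
            have hvV₁ : v ∈ V₁ := hJ₁.1 hvJ.1
            rcases hJoin_adj.mp hadj with h | h | ⟨_, _, h2⟩ | ⟨_, _, h2⟩
            · exact h
            · exact (hcons u v ⟨huV₁, (hE₂ _ _ h).1⟩ ⟨hvV₁, (hE₂ _ _ h).2⟩).mpr h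
            · exact absurd hvV₁ h2
            · exact absurd huV₁ h2
          · -- crossing pair with S₁ = J, S₂ = I : contradiction
            exfalso
            apply hnc
            refine ⟨J, I, hJ₁, hI₂, ?_, ?_, ?_⟩
            · have : (J : Set W) ∩ (V₁ ∩ V₂) = ((I ∩ J : Finset W) : Set W) := by
                ext x
                rw [Finset.coe_inter]
                constructor
                · rintro ⟨hxJ, _, hxV₂⟩
                  refine ⟨?_, hxJ⟩
                  by_contra hxI
                  exact hvV₂ ((huniqJ x hxJ hxI) ▸ hxV₂)
                · rintro ⟨hxI, hxJ⟩
                  exact ⟨hxJ, hJ₁.1 hxJ, hI₂.1 hxI⟩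
              rw [this, Set.ncard_coe_finset, hinter]
            · have : (I : Set W) ∩ (V₁ ∩ V₂) = ((I ∩ J : Finset W) : Set W) := by
                ext x
                rw [Finset.coe_inter]
                constructor
                · rintro ⟨hxI, hxV₁, _⟩
                  refine ⟨hxI, ?_⟩
                  by_contra hxJ
                  exact huV₁ ((huniqI x hxI hxJ) ▸ hxV₁)
                · rintro ⟨hxI, hxJ⟩
                  exact ⟨hxI, hJ₁.1 hxJ, hI₂.1 hxI⟩
              rw [this, Set.ncard_coe_finset, hinter]
            · rw [Set.inter_comm, ← Finset.coe_inter, Set.ncard_coe_finset, hinter]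
      · -- both in G₂
        right
        refine ⟨hI₂, hJ₂, u, v, hIJ, hJI, ?_⟩
        have huV₂ : u ∈ V₂ := hI₂.1 huI.1
        have hvV₂ : v ∈ V₂ := hJ₂.1 hvJ.1
        rcases hJoin_adj.mp hadj with h | h | ⟨⟨_, h2⟩, _⟩ | ⟨⟨_, h2⟩, _⟩
        · exact (hcons u v ⟨(hE₁ _ _ h).1, huV₂⟩ ⟨(hE₁ _ _ h).2, hvV₂⟩).mp h
        · exact h
        · exact absurd huV₂ h2
        · exact absurd hvV₂ h2
    · rintro (⟨hI₁, hJ₁, u, v, hIJ, hJI, hadj⟩ | ⟨hI₂, hJ₂, u, v, hIJ, hJI, hadj⟩)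
      · exact ⟨indep_join_of_left hE₂ hcons hI₁, indep_join_of_left hE₂ hcons hJ₁,
          u, v, hIJ, hJI, hJoin_adj.mpr (Or.inl hadj)⟩
      · exact ⟨indep_join_of_right hE₁ hcons hI₂, indep_join_of_right hE₁ hcons hJ₂,
          u, v, hIJ, hJI, hJoin_adj.mpr (Or.inr (Or.inl hadj))⟩
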